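/- Let p be a prime and let a, c, u ∈ ℚ_p^× with a + u·a⁻¹·c ≠ 0. Then the quadratic Hilbert symbols over ℚ_p satisfy (−a·c, a + u·a⁻¹·c) · (u·a⁻¹, a²·u⁻¹ + c) = (−u·c, a) · (u·a⁻¹, −1). -/

import Mathlib

open scoped Classical

/-- The quadratic Hilbert symbol over `ℚ_p`: `1` if `z² = a·x² + b·y²` has a nonzero
solution, `-1` otherwise. -/
noncomputable def hilbertSym (p : ℕ) [Fact p.Prime] (a b : ℚ_[p]) : ℤ :=
  if ∃ x y z : ℚ_[p], (x, y, z) ≠ (0, 0, 0) ∧ z ^ 2 = a * x ^ 2 + b * y ^ 2 then 1 else -1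

namespace HilbAux

variable {p : ℕ} [Fact p.Prime]

/-- `t` is a value of the norm form `z² - d·w²`. -/
def isN (d t : ℚ_[p]) : Prop := ∃ z w : ℚ_[p], z ^ 2 - d * w ^ 2 = t

lemma isN_mul {d t t' : ℚ_[p]} (h : isN d t) (h' : isN d t') : isN d (t * t') := by
  obtain ⟨z, w, hz⟩ := h
  obtain ⟨z', w', hz'⟩ := h'
  exact ⟨z * z' + d * w * w', z * w' + w * z', by rw [← hz, ← hz']; ring⟩

lemma isN_sq {d : ℚ_[p]} (e : ℚ_[p]) : isN d (e ^ 2) := ⟨e, 0, by ring⟩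

lemma isN_of_isSquare {d t : ℚ_[p]} (h : IsSquare t) : isN d t := by
  obtain ⟨e, rfl⟩ := h
  exact ⟨e, 0, by ring⟩

lemma isN_neg_d (d : ℚ_[p]) : isN d (-d) := ⟨0, 1, by ring⟩

lemma isN_cancel {d x y : ℚ_[p]} (hx0 : x ≠ 0) (hx : isN d x) (hxy : isN d (x * y)) :
    isN d y := by
  have := isN_mul (isN_mul hxy hx) (isN_sq x⁻¹)
  have hy : x * y * x * x⁻¹ ^ 2 = y := by field_simp
  rwa [hy] at this

lemma isN_scale {d t : ℚ_[p]} (e : ℚ_[p]) (he : e ≠ 0) :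
    isN (d * e ^ 2) t ↔ isN d t := by
  constructor
  · rintro ⟨z, w, hz⟩
    exact ⟨z, e * w, by rw [← hz]; ring⟩
  · rintro ⟨z, w, hz⟩
    exact ⟨z, e⁻¹ * w, by rw [← hz]; field_simp⟩

lemma hs_one_of_isN {d b : ℚ_[p]} (h : isN d b) : hilbertSym p d b = 1 := by
  obtain ⟨z, w, hz⟩ := h
  rw [hilbertSym, if_pos]
  refine ⟨w, 1, z, ?_, by rw [← hz]; ring⟩
  simp

lemma hs_eq_one_iff {d b : ℚ_[p]} (hd : ¬IsSquare d) : hilbertSym p d b = 1 ↔ isN d b := by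
  constructor
  · intro h
    rw [hilbertSym] at h
    split_ifs at h with hcond
    · obtain ⟨x, y, z, hne, heq⟩ := hcond
      rcases eq_or_ne y 0 with rfl | hy
      · rcases eq_or_ne x 0 with rfl | hx
        · have hz : z = 0 := by
            have : z ^ 2 = 0 := by rw [heq]; ring
            exact pow_eq_zero_iff (by norm_num) |>.mp this
          simp [hz] at hne
        · exfalso
          apply hd
          refine ⟨z * x⁻¹, ?_⟩
          have : z ^ 2 = d * x ^ 2 := by rw [heq]; ring
          field_simp
          linear_combination -this
      · exact ⟨z * y⁻¹, x * y⁻¹, by field_simp; linear_combination heq⟩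
  · exact hs_one_of_isN

lemma hs_neg_one_iff {d b : ℚ_[p]} (hd : ¬IsSquare d) :
    hilbertSym p d b = -1 ↔ ¬isN d b := by
  rw [← hs_eq_one_iff (b := b) hd, hilbertSym]
  split_ifs <;> simp

lemma hs_one_of_isSquare {d : ℚ_[p]} (b : ℚ_[p]) (hd : IsSquare d) :
    hilbertSym p d b = 1 := by
  obtain ⟨e, rfl⟩ := hd
  rw [hilbertSym, if_pos]
  exact ⟨1, 0, e, by simp, by ring⟩

lemma hs_symm (a b : ℚ_[p]) : hilbertSym p a b = hilbertSym p b a := by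
  rw [hilbertSym, hilbertSym]
  refine if_congr ?_ rfl rfl
  constructor
  · rintro ⟨x, y, z, hne, heq⟩
    refine ⟨y, x, z, ?_, by rw [heq]; ring⟩
    simp only [ne_eq, Prod.mk.injEq, not_and] at hne ⊢
    tauto
  · rintro ⟨x, y, z, hne, heq⟩
    refine ⟨y, x, z, ?_, by rw [heq]; ring⟩
    simp only [ne_eq, Prod.mk.injEq, not_and] at hne ⊢
    tauto



lemma p_cast_ne_zero : (p : ℚ_[p]) ≠ 0 :=
  Nat.cast_ne_zero.mpr (Fact.out (p := p.Prime)).ne_zero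

lemma p_real_pos : (0 : ℝ) < (p : ℝ) :=
  Nat.cast_pos.mpr (Fact.out (p := p.Prime)).pos

lemma p_real_ne_one : (p : ℝ) ≠ 1 :=
  ((Nat.one_lt_cast (α := ℝ)).mpr (Fact.out (p := p.Prime)).one_lt).ne'

/-- The unit part of a `p`-adic number: `t * p^(-v(t))`, as a `p`-adic integer. -/
noncomputable def uPart (t : ℚ_[p]) : ℤ_[p] :=
  if h : ‖t * (p : ℚ_[p]) ^ (-t.valuation)‖ ≤ 1 then ⟨_, h⟩ else 0

lemma norm_t_mul_pow {t : ℚ_[p]} (ht : t ≠ 0) :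
    ‖t * (p : ℚ_[p]) ^ (-t.valuation)‖ = 1 := by
  rw [norm_mul, Padic.norm_eq_zpow_neg_valuation ht, Padic.norm_p_zpow, neg_neg,
    ← zpow_add₀ (ne_of_gt p_real_pos), neg_add_cancel, zpow_zero]

lemma uPart_coe {t : ℚ_[p]} (ht : t ≠ 0) :
    (uPart t : ℚ_[p]) = t * (p : ℚ_[p]) ^ (-t.valuation) := by
  unfold uPart
  exact congrArg Subtype.val (dif_pos (norm_t_mul_pow ht).le)

lemma norm_uPart {t : ℚ_[p]} (ht : t ≠ 0) : ‖uPart t‖ = 1 := by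
  rw [PadicInt.norm_def, uPart_coe ht, norm_t_mul_pow ht]

lemma isUnit_uPart {t : ℚ_[p]} (ht : t ≠ 0) : IsUnit (uPart t) :=
  PadicInt.isUnit_iff.mpr (norm_uPart ht)

lemma uPart_spec {t : ℚ_[p]} (ht : t ≠ 0) :
    t = (uPart t : ℚ_[p]) * (p : ℚ_[p]) ^ t.valuation := by
  rw [uPart_coe ht, mul_assoc, ← zpow_add₀ p_cast_ne_zero, neg_add_cancel, zpow_zero, mul_one]

lemma uPart_mul {x y : ℚ_[p]} (hx : x ≠ 0) (hy : y ≠ 0) :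
    uPart (x * y) = uPart x * uPart y := by
  have hxy : x * y ≠ 0 := mul_ne_zero hx hy
  apply Subtype.ext
  push_cast
  rw [uPart_coe hxy, uPart_coe hx, uPart_coe hy, Padic.valuation_mul hx hy, neg_add,
    zpow_add₀ p_cast_ne_zero]
  ring

lemma val_eq_zero_of_norm_one {t : ℚ_[p]} (ht : t ≠ 0) (h : ‖t‖ = 1) : t.valuation = 0 := by
  have h2 := Padic.norm_eq_zpow_neg_valuation ht
  rw [h] at h2
  have := zpow_right_injective₀ p_real_pos p_real_ne_one (h2.symm.trans (zpow_zero _).symm)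
  omega

lemma uPart_coe_int {v : ℤ_[p]} (hv : ‖v‖ = 1) : uPart (v : ℚ_[p]) = v := by
  have hv0 : (v : ℚ_[p]) ≠ 0 := by
    intro h; rw [PadicInt.norm_def, h, norm_zero] at hv; norm_num at hv
  apply Subtype.ext
  rw [uPart_coe hv0, val_eq_zero_of_norm_one hv0 (by rwa [← PadicInt.norm_def]), neg_zero,
    zpow_zero, mul_one]

lemma valuation_neg (t : ℚ_[p]) : (-t).valuation = t.valuation := by
  rcases eq_or_ne t 0 with rfl | ht
  · simp
  have h1 : (-t) ≠ 0 := neg_ne_zero.mpr ht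
  have := Padic.norm_eq_zpow_neg_valuation h1
  rw [norm_neg, Padic.norm_eq_zpow_neg_valuation ht] at this
  have := zpow_right_injective₀ p_real_pos p_real_ne_one this.symm
  omega

/-- Hensel's lemma for `c * z ^ 2 = e`. -/
lemma henq {c e : ℤ_[p]} (a : ℤ_[p]) (h : ‖c * a ^ 2 - e‖ < ‖2 * c * a‖ ^ 2) :
    ∃ z : ℤ_[p], c * z ^ 2 = e := by
  set F : Polynomial ℤ_[p] := Polynomial.C c * Polynomial.X ^ 2 - Polynomial.C e with hF
  have heval : ∀ x : ℤ_[p], F.eval x = c * x ^ 2 - e := by intro x; simp [hF]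
  have hder : ∀ x : ℤ_[p], F.derivative.eval x = 2 * c * x := by
    intro x
    simp [hF]
    ring
  obtain ⟨z, hz, -⟩ := hensels_lemma (F := F) (a := a) (by simp only [Polynomial.coe_aeval_eq_eval]; rw [heval, hder]; exact h)
  refine ⟨z, ?_⟩
  have := heval z
  rw [Polynomial.coe_aeval_eq_eval] at hz
  rw [hz] at this
  exact sub_eq_zero.mp this.symm

lemma toZMod_eq_zero_iff {x : ℤ_[p]} : PadicInt.toZMod x = 0 ↔ ‖x‖ < 1 := by
  rw [← RingHom.mem_ker, PadicInt.ker_toZMod, IsLocalRing.mem_maximalIdeal,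
    PadicInt.mem_nonunits]

lemma norm_natCast_one {n : ℕ} (h : ¬ p ∣ n) : ‖(n : ℤ_[p])‖ = 1 := by
  refine le_antisymm (PadicInt.norm_le_one _) (not_lt.mp fun hlt => h ?_)
  have := (PadicInt.norm_int_lt_one_iff_dvd (n : ℤ)).mp (by exact_mod_cast hlt)
  exact_mod_cast this

lemma norm_two_eq_one (hp2 : p ≠ 2) : ‖(2 : ℤ_[p])‖ = 1 := by
  have := norm_natCast_one (p := p) (n := 2) (by
    intro hdvd
    exact hp2 ((Nat.prime_dvd_prime_iff_eq Fact.out Nat.prime_two).mp hdvd))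
  simpa using this





lemma norm_res_lift {r : ZMod p} (hr : r ≠ 0) : ‖((r.val : ℕ) : ℤ_[p])‖ = 1 := by
  haveI : NeZero p := ⟨(Fact.out (p := p.Prime)).ne_zero⟩
  refine norm_natCast_one fun hdvd => ?_
  have h1 : r.val < p := ZMod.val_lt r
  have h2 : r.val ≠ 0 := fun h => hr (by rwa [← ZMod.val_eq_zero])
  exact absurd (Nat.le_of_dvd (Nat.pos_of_ne_zero h2) hdvd) (not_le.mpr h1)

lemma toZMod_lift (r : ZMod p) : PadicInt.toZMod ((r.val : ℤ_[p])) = r := by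
  haveI : NeZero p := ⟨(Fact.out (p := p.Prime)).ne_zero⟩
  rw [map_natCast, ZMod.natCast_val, ZMod.cast_id]

lemma toZMod_uPart_ne_zero {t : ℚ_[p]} (ht : t ≠ 0) : PadicInt.toZMod (uPart t) ≠ 0 := by
  rw [ne_eq, toZMod_eq_zero_iff, norm_uPart ht]
  norm_num

/-- For odd `p`, a unit whose residue is a square is a square. -/
lemma sq_of_res_sq (hp2 : p ≠ 2) {u : ℤ_[p]} (hu : ‖u‖ = 1)
    (hres : IsSquare (PadicInt.toZMod u)) : ∃ z : ℤ_[p], z ^ 2 = u := by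
  obtain ⟨r, hr⟩ := hres
  have hr0 : r ≠ 0 := by
    rintro rfl
    rw [mul_zero] at hr
    rw [toZMod_eq_zero_iff, hu] at hr
    norm_num at hr
  set a : ℤ_[p] := (r.val : ℤ_[p]) with ha
  have h1 : ‖1 * a ^ 2 - u‖ < ‖2 * 1 * a‖ ^ 2 := by
    have hlt : ‖1 * a ^ 2 - u‖ < 1 := by
      rw [← toZMod_eq_zero_iff]
      simp only [map_sub, map_mul, map_one, map_pow, one_mul]
      rw [ha, toZMod_lift, hr]
      ring
    have hn : ‖2 * 1 * a‖ = 1 := by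
      rw [mul_one, norm_mul, norm_two_eq_one hp2, norm_res_lift hr0]
      norm_num
    rw [hn]; simpa using hlt
  obtain ⟨z, hz⟩ := henq a h1
  exact ⟨z, by rwa [one_mul] at hz⟩

/-- For odd `p`, every unit is a value of `z² - d·w²` for unit `d`. -/
lemma unit_isN_int (hp2 : p ≠ 2) {d u : ℤ_[p]} (hd : ‖d‖ = 1) (hu : ‖u‖ = 1) :
    ∃ z w : ℤ_[p], z ^ 2 - d * w ^ 2 = u := by
  haveI : NeZero p := ⟨(Fact.out (p := p.Prime)).ne_zero⟩
  have hd0 : PadicInt.toZMod d ≠ 0 := by rw [ne_eq, toZMod_eq_zero_iff, hd]; norm_num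
  have hu0 : PadicInt.toZMod u ≠ 0 := by rw [ne_eq, toZMod_eq_zero_iff, hu]; norm_num
  -- finite field solution
  obtain ⟨a0, b0, hab⟩ := FiniteField.exists_root_sum_quadratic
    (f := Polynomial.X ^ 2 - Polynomial.C (PadicInt.toZMod u))
    (g := Polynomial.C (-(PadicInt.toZMod d)) * Polynomial.X ^ 2)
    (Polynomial.degree_X_pow_sub_C (by norm_num) _)
    (Polynomial.degree_C_mul_X_pow _ (neg_ne_zero.mpr hd0))
    (by rw [ZMod.card]; exact (Fact.out : p.Prime).mod_two_eq_one_iff_ne_two.mpr hp2)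
  simp only [Polynomial.eval_add, Polynomial.eval_sub, Polynomial.eval_mul, Polynomial.eval_pow,
    Polynomial.eval_X, Polynomial.eval_C] at hab
  have hab' : a0 ^ 2 - PadicInt.toZMod d * b0 ^ 2 = PadicInt.toZMod u := by
    linear_combination hab
  rcases eq_or_ne a0 0 with rfl | ha0
  · -- solve d * w^2 = -u  via Hensel at b0
    have hb0 : b0 ≠ 0 := by
      intro h
      rw [h] at hab'
      simp at hab'
      exact hu0 hab'.symm
    set B : ℤ_[p] := (b0.val : ℤ_[p]) with hB
    have h1 : ‖d * B ^ 2 - (-u)‖ < ‖2 * d * B‖ ^ 2 := by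
      have hlt : ‖d * B ^ 2 - (-u)‖ < 1 := by
        rw [← toZMod_eq_zero_iff]
        simp only [map_sub, map_mul, map_neg, map_pow]
        rw [hB, toZMod_lift]
        linear_combination -hab'
      have hn : ‖2 * d * B‖ = 1 := by
        rw [norm_mul, norm_mul, norm_two_eq_one hp2, hd, norm_res_lift hb0]
        norm_num
      rw [hn]; simpa using hlt
    obtain ⟨w, hw⟩ := henq B h1
    exact ⟨0, w, by linear_combination -hw⟩
  · -- solve z^2 = u + d * B^2 via Hensel at a0
    set A : ℤ_[p] := (a0.val : ℤ_[p]) with hA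
    set B : ℤ_[p] := (b0.val : ℤ_[p]) with hB
    have h1 : ‖1 * A ^ 2 - (u + d * B ^ 2)‖ < ‖2 * 1 * A‖ ^ 2 := by
      have hlt : ‖1 * A ^ 2 - (u + d * B ^ 2)‖ < 1 := by
        rw [← toZMod_eq_zero_iff]
        simp only [map_sub, map_add, map_mul, map_one, map_pow, one_mul]
        rw [hA, hB, toZMod_lift, toZMod_lift]
        linear_combination hab'
      have hn : ‖2 * 1 * A‖ = 1 := by
        rw [mul_one, norm_mul, norm_two_eq_one hp2, norm_res_lift ha0]
        norm_num
      rw [hn]; simpa using hlt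
    obtain ⟨z, hz⟩ := henq A h1
    rw [one_mul] at hz
    exact ⟨z, B, by linear_combination hz⟩

/-- Square criterion in `ℚ_p`, `p` odd. -/
lemma isSquare_iff_odd (hp2 : p ≠ 2) {t : ℚ_[p]} (ht : t ≠ 0) :
    IsSquare t ↔ Even t.valuation ∧ IsSquare (PadicInt.toZMod (uPart t)) := by
  constructor
  · rintro ⟨s, rfl⟩
    have hs : s ≠ 0 := fun h => ht (by rw [h, mul_zero])
    constructor
    · rw [Padic.valuation_mul hs hs]
      exact ⟨s.valuation, rfl⟩
    · rw [uPart_mul hs hs, map_mul]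
      exact ⟨_, rfl⟩
  · rintro ⟨⟨k, hk⟩, hres⟩
    obtain ⟨z, hz⟩ := sq_of_res_sq hp2 (norm_uPart ht) hres
    refine ⟨(z : ℚ_[p]) * (p : ℚ_[p]) ^ k, ?_⟩
    have := uPart_spec ht
    rw [hk] at this
    rw [this, ← hz]
    push_cast
    rw [zpow_add₀ p_cast_ne_zero]
    ring


lemma zmod_sq_mul {a b : ZMod p} (ha : a ≠ 0) (hb : b ≠ 0) :
    IsSquare (a * b) ↔ (IsSquare a ↔ IsSquare b) := by
  haveI : NeZero p := ⟨(Fact.out (p := p.Prime)).ne_zero⟩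
  have hab : a * b ≠ 0 := mul_ne_zero ha hb
  have h1 := quadraticChar_one_iff_isSquare (F := ZMod p) ha
  have h2 := quadraticChar_one_iff_isSquare (F := ZMod p) hb
  have h3 := quadraticChar_one_iff_isSquare (F := ZMod p) hab
  have hm : quadraticChar (ZMod p) (a * b)
      = quadraticChar (ZMod p) a * quadraticChar (ZMod p) b := map_mul _ _ _
  rcases quadraticChar_dichotomy ha with e1 | e1 <;> rcases quadraticChar_dichotomy hb with e2 | e2 <;>
    rw [e1] at h1 <;> rw [e2] at h2 <;> rw [hm, e1, e2] at h3 <;>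
    norm_num at h1 h2 h3 <;> tauto

lemma Emul {x y : ℚ_[p]} (hx : x ≠ 0) (hy : y ≠ 0) :
    Even (x * y).valuation ↔ (Even x.valuation ↔ Even y.valuation) := by
  rw [Padic.valuation_mul hx hy, Int.even_add]

lemma Smul {x y : ℚ_[p]} (hx : x ≠ 0) (hy : y ≠ 0) :
    IsSquare (PadicInt.toZMod (uPart (x * y)))
      ↔ (IsSquare (PadicInt.toZMod (uPart x)) ↔ IsSquare (PadicInt.toZMod (uPart y))) := by
  rw [uPart_mul hx hy, map_mul]
  exact zmod_sq_mul (toZMod_uPart_ne_zero hx) (toZMod_uPart_ne_zero hy)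

lemma klein4 (ex ey e1 sx sy s1 : Prop)
    (nx1 : ¬(ex ∧ sx)) (nx2 : ¬((ex ↔ e1) ∧ (sx ↔ s1)))
    (ny1 : ¬(ey ∧ sy)) (ny2 : ¬((ey ↔ e1) ∧ (sy ↔ s1)))
    (h1 : ¬(e1 ∧ s1)) :
    ((ex ↔ ey) ∧ (sx ↔ sy)) ∨ (((ex ↔ ey) ↔ e1) ∧ ((sx ↔ sy) ↔ s1)) := by
  by_cases hex : ex <;> by_cases hey : ey <;> by_cases he1 : e1 <;>
    by_cases hsx : sx <;> by_cases hsy : sy <;> by_cases hs1 : s1 <;> simp_all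

lemma key_odd (hp2 : p ≠ 2) {d x y : ℚ_[p]} (hd0 : d ≠ 0) (hd : ¬IsSquare d)
    (hx0 : x ≠ 0) (hy0 : y ≠ 0) (hx : ¬isN d x) (hy : ¬isN d y) : isN d (x * y) := by
  obtain ⟨h1, h10, hN1, hns1⟩ : ∃ h1 : ℚ_[p], h1 ≠ 0 ∧ isN d h1 ∧ ¬IsSquare h1 := by
    by_cases hev : Even d.valuation
    · obtain ⟨k, hk⟩ := hev
      have hdu : d = (uPart d : ℚ_[p]) * ((p : ℚ_[p]) ^ k) ^ 2 := by
        have h2 : ((p : ℚ_[p]) ^ k) ^ 2 = (p : ℚ_[p]) ^ (k + k) := by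
          rw [zpow_add₀ p_cast_ne_zero, pow_two]
        have h3 := uPart_spec hd0
        rw [hk] at h3
        rw [h2]
        exact h3
      obtain ⟨rr, hrr⟩ := FiniteField.exists_nonsquare (F := ZMod p)
        (by rw [ZMod.ringChar_zmod_n]; exact hp2)
      have hrr0 : rr ≠ 0 := fun h => hrr (h ▸ ⟨0, (mul_zero 0).symm⟩)
      set r : ℤ_[p] := ((rr.val : ℕ) : ℤ_[p]) with hrdef
      have hrnorm : ‖r‖ = 1 := norm_res_lift hrr0
      have hr0 : r ≠ 0 := fun h => by rw [h, norm_zero] at hrnorm; norm_num at hrnorm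
      have hrQ0 : (r : ℚ_[p]) ≠ 0 := fun h => hr0 (PadicInt.coe_eq_zero.mp h)
      obtain ⟨z, w, hzw⟩ := unit_isN_int hp2 (norm_uPart hd0) hrnorm
      refine ⟨(r : ℚ_[p]), hrQ0, ?_, ?_⟩
      · rw [hdu, isN_scale _ (zpow_ne_zero _ p_cast_ne_zero)]
        refine ⟨(z : ℚ_[p]), (w : ℚ_[p]), ?_⟩
        exact_mod_cast congrArg (fun t : ℤ_[p] => (t : ℚ_[p])) hzw
      · intro hsq
        rw [isSquare_iff_odd hp2 hrQ0, uPart_coe_int hrnorm, hrdef, toZMod_lift] at hsq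
        exact hrr hsq.2
    · refine ⟨-d, neg_ne_zero.mpr hd0, isN_neg_d d, fun hsq => ?_⟩
      rw [isSquare_iff_odd hp2 (neg_ne_zero.mpr hd0), valuation_neg] at hsq
      exact hev hsq.1
  have step : ∀ t : ℚ_[p], t ≠ 0 → ¬isN d t → ¬IsSquare t ∧ ¬IsSquare (t * h1) := by
    intro t ht hN
    refine ⟨fun hs => hN (isN_of_isSquare hs), fun hs => ?_⟩
    have h2 := isN_of_isSquare (d := d) hs
    rw [mul_comm] at h2
    exact hN (isN_cancel h10 hN1 h2)
  obtain ⟨nx1, nx2⟩ := step x hx0 hx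
  obtain ⟨ny1, ny2⟩ := step y hy0 hy
  suffices hS : IsSquare (x * y) ∨ IsSquare (x * y * h1) by
    rcases hS with hS | hS
    · exact isN_of_isSquare hS
    · have h2 := isN_of_isSquare (d := d) hS
      rw [mul_comm] at h2
      exact isN_cancel h10 hN1 h2
  have hxy0 : x * y ≠ 0 := mul_ne_zero hx0 hy0
  have hxyh0 : x * y * h1 ≠ 0 := mul_ne_zero hxy0 h10
  have hxh0 : x * h1 ≠ 0 := mul_ne_zero hx0 h10
  have hyh0 : y * h1 ≠ 0 := mul_ne_zero hy0 h10
  rw [isSquare_iff_odd hp2 hx0] at nx1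
  rw [isSquare_iff_odd hp2 hxh0, Emul hx0 h10, Smul hx0 h10] at nx2
  rw [isSquare_iff_odd hp2 hy0] at ny1
  rw [isSquare_iff_odd hp2 hyh0, Emul hy0 h10, Smul hy0 h10] at ny2
  rw [isSquare_iff_odd hp2 h10] at hns1
  rw [isSquare_iff_odd hp2 hxy0, isSquare_iff_odd hp2 hxyh0, Emul hxy0 h10, Smul hxy0 h10,
    Emul hx0 hy0, Smul hx0 hy0]
  exact klein4 _ _ _ _ _ _ nx1 nx2 ny1 ny2 hns1

/-! ### The case `p = 2` -/

/-- Residue of the unit part mod 8. -/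
noncomputable def R8 (t : ℚ_[2]) : ZMod (2 ^ 3) := PadicInt.toZModPow 3 (uPart t)

/-- Valuation mod 2. -/
noncomputable def V2 (t : ℚ_[2]) : ZMod 2 := (t.valuation : ZMod 2)

lemma R8_unit {t : ℚ_[2]} (ht : t ≠ 0) : IsUnit (R8 t) :=
  (isUnit_uPart ht).map (PadicInt.toZModPow 3)

lemma R8_mul {x y : ℚ_[2]} (hx : x ≠ 0) (hy : y ≠ 0) : R8 (x * y) = R8 x * R8 y := by
  rw [R8, uPart_mul hx hy, map_mul]; rfl

lemma V2_mul {x y : ℚ_[2]} (hx : x ≠ 0) (hy : y ≠ 0) : V2 (x * y) = V2 x + V2 y := by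
  rw [V2, Padic.valuation_mul hx hy, Int.cast_add]; rfl

lemma isSquare_iff_two {t : ℚ_[2]} (ht : t ≠ 0) :
    IsSquare t ↔ V2 t = 0 ∧ R8 t = 1 := by
  constructor
  · rintro ⟨s, rfl⟩
    have hs : s ≠ 0 := fun h => ht (by rw [h, mul_zero])
    constructor
    · rw [V2_mul hs hs]
      exact (by decide : ∀ a : ZMod 2, a + a = 0) _
    · rw [R8_mul hs hs]
      exact (by decide : ∀ a : ZMod (2 ^ 3), IsUnit a → a * a = 1) _ (R8_unit hs)
  · rintro ⟨hv, hr⟩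
    have hev : Even t.valuation := by
      obtain ⟨c, hc⟩ := (ZMod.intCast_zmod_eq_zero_iff_dvd t.valuation 2).mp hv
      exact ⟨c, by omega⟩
    obtain ⟨k, hk⟩ := hev
    have hu := norm_uPart ht
    have h18 : ‖(1 : ℤ_[2]) * 1 ^ 2 - uPart t‖ < ‖(2 : ℤ_[2]) * 1 * 1‖ ^ 2 := by
      have hmem : (1 : ℤ_[2]) * 1 ^ 2 - uPart t ∈ Ideal.span {((2 : ℕ) : ℤ_[2]) ^ 3} := by
        rw [← PadicInt.ker_toZModPow, RingHom.mem_ker, map_sub, map_mul, map_one, map_pow,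
          map_one]
        have hr' : PadicInt.toZModPow 3 (uPart t) = 1 := hr
        rw [hr']
        ring
      have hle := (PadicInt.norm_le_pow_iff_mem_span_pow ((1 : ℤ_[2]) * 1 ^ 2 - uPart t) 3).mpr
        hmem
      have h2n : ‖(2 : ℤ_[2]) * 1 * 1‖ = 2⁻¹ := by
        have h9 := PadicInt.norm_p (p := 2)
        rw [show ((2 : ℕ) : ℤ_[2]) = (2 : ℤ_[2]) by norm_num] at h9
        rw [mul_one, mul_one, h9]
        norm_num
      rw [h2n]
      refine lt_of_le_of_lt hle ?_
      norm_num
    obtain ⟨z, hz⟩ := henq 1 h18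
    rw [one_mul] at hz
    refine ⟨(z : ℚ_[2]) * (2 : ℚ_[2]) ^ k, ?_⟩
    have hspec := uPart_spec ht
    rw [hk] at hspec
    have hp2 : ((2 : ℕ) : ℚ_[2]) = (2 : ℚ_[2]) := by norm_num
    rw [hspec, ← hz, hp2]
    push_cast
    rw [zpow_add₀ (show (2 : ℚ_[2]) ≠ 0 by norm_num)]
    ring

lemma odd_facts {m : ℤ} (h : Odd m) :
    ((m : ℚ_[2]) ≠ 0) ∧ V2 (m : ℚ_[2]) = 0 ∧ R8 (m : ℚ_[2]) = (m : ZMod (2 ^ 3)) := by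
  have hndvd : ¬ ((2 : ℤ) ∣ m) := by
    rw [Int.odd_iff] at h
    omega
  have hm0 : m ≠ 0 := by rintro rfl; exact hndvd ⟨0, by ring⟩
  have hne : (m : ℚ_[2]) ≠ 0 := Int.cast_ne_zero.mpr hm0
  have hnorm : ‖(m : ℚ_[2])‖ = 1 := by
    refine le_antisymm (Padic.norm_int_le_one m) (not_lt.mp fun hlt => hndvd ?_)
    exact_mod_cast (Padic.norm_intCast_lt_one_iff (k := m)).mp hlt
  have hnormZ : ‖(m : ℤ_[2])‖ = 1 := by
    refine le_antisymm (PadicInt.norm_le_one _) (not_lt.mp fun hlt => hndvd ?_)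
    exact_mod_cast (PadicInt.norm_int_lt_one_iff_dvd m).mp hlt
  have hcoe : ((m : ℤ_[2]) : ℚ_[2]) = (m : ℚ_[2]) := by push_cast; rfl
  have hup : uPart (m : ℚ_[2]) = (m : ℤ_[2]) := by
    rw [← hcoe]
    exact uPart_coe_int hnormZ
  refine ⟨hne, ?_, ?_⟩
  · rw [V2, val_eq_zero_of_norm_one hne hnorm]; rfl
  · rw [R8, hup, map_intCast]

lemma two_facts : V2 (2 : ℚ_[2]) = 1 ∧ R8 (2 : ℚ_[2]) = 1 := by
  have hp2 : ((2 : ℕ) : ℚ_[2]) = (2 : ℚ_[2]) := by norm_num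
  have hval : (2 : ℚ_[2]).valuation = 1 := by
    rw [← hp2, Padic.valuation_p]
  have h20 : (2 : ℚ_[2]) ≠ 0 := by norm_num
  have hup : uPart (2 : ℚ_[2]) = 1 := by
    apply Subtype.ext
    rw [uPart_coe h20, hval]
    push_cast
    rw [zpow_neg, zpow_one]
    norm_num
  constructor
  · rw [V2, hval]; rfl
  · rw [R8, hup, map_one]

lemma twoMul_facts {m : ℤ} (h : Odd m) :
    (((2 * m : ℤ) : ℚ_[2]) ≠ 0) ∧ V2 ((2 * m : ℤ) : ℚ_[2]) = 1 ∧
      R8 ((2 * m : ℤ) : ℚ_[2]) = (m : ZMod (2 ^ 3)) := by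
  obtain ⟨hne, hv, hr⟩ := odd_facts h
  have h20 : (2 : ℚ_[2]) ≠ 0 := by norm_num
  have hcast : ((2 * m : ℤ) : ℚ_[2]) = (2 : ℚ_[2]) * (m : ℚ_[2]) := by push_cast; ring
  refine ⟨by rw [hcast]; exact mul_ne_zero h20 hne, ?_, ?_⟩
  · rw [hcast, V2_mul h20 hne, two_facts.1, hv, add_zero]
  · rw [hcast, R8_mul h20 hne, two_facts.2, hr, one_mul]

lemma ns_odd {m : ℤ} (h : Odd m) (h8 : (m : ZMod (2 ^ 3)) ≠ 1) :
    ¬IsSquare ((m : ℤ) : ℚ_[2]) := by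
  obtain ⟨hne, _, hr⟩ := odd_facts h
  rw [isSquare_iff_two hne, hr]
  tauto

lemma ns_two {m : ℤ} (h : Odd m) : ¬IsSquare (((2 * m : ℤ)) : ℚ_[2]) := by
  obtain ⟨hne, hv, _⟩ := twoMul_facts h
  rw [isSquare_iff_two hne, hv]
  simp

lemma ns_even {c : ℤ} (m : ℤ) (hm : Odd m) (hc : c = 2 * m) : ¬IsSquare ((c : ℤ) : ℚ_[2]) := by
  subst hc; exact ns_two hm

lemma even_facts {c : ℤ} (m : ℤ) (hm : Odd m) (hc : c = 2 * m) :
    ((c : ℚ_[2]) ≠ 0) ∧ V2 (c : ℚ_[2]) = 1 ∧ R8 (c : ℚ_[2]) = (m : ZMod (2 ^ 3)) := by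
  subst hc; exact twoMul_facts hm

set_option maxHeartbeats 4000000 in
set_option synthInstance.maxHeartbeats 2000000 in
set_option synthInstance.maxSize 2000 in
set_option maxRecDepth 4000 in
lemma klein8 (vx vy v1 v2 : ZMod 2) (rx ry r1 r2 : ZMod (2 ^ 3))
    (ux : rx * rx = 1) (uy : ry * ry = 1) (u1 : r1 * r1 = 1) (u2 : r2 * r2 = 1)
    (n1 : ¬(v1 = 0 ∧ r1 = 1)) (n2 : ¬(v2 = 0 ∧ r2 = 1))
    (n12 : ¬(v1 + v2 = 0 ∧ r1 * r2 = 1))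
    (nx0 : ¬(vx = 0 ∧ rx = 1)) (nx1 : ¬(vx + v1 = 0 ∧ rx * r1 = 1))
    (nx2 : ¬(vx + v2 = 0 ∧ rx * r2 = 1)) (nx12 : ¬(vx + (v1 + v2) = 0 ∧ rx * (r1 * r2) = 1))
    (ny0 : ¬(vy = 0 ∧ ry = 1)) (ny1 : ¬(vy + v1 = 0 ∧ ry * r1 = 1))
    (ny2 : ¬(vy + v2 = 0 ∧ ry * r2 = 1)) (ny12 : ¬(vy + (v1 + v2) = 0 ∧ ry * (r1 * r2) = 1)) :
    (vx + vy = 0 ∧ rx * ry = 1) ∨ (vx + vy + v1 = 0 ∧ rx * ry * r1 = 1) ∨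
      (vx + vy + v2 = 0 ∧ rx * ry * r2 = 1) ∨
      (vx + vy + (v1 + v2) = 0 ∧ rx * ry * (r1 * r2) = 1) := by
  revert ux uy u1 u2 n1 n2 n12 nx0 nx1 nx2 nx12 ny0 ny1 ny2 ny12
  revert vx vy v1 v2 rx ry r1 r2
  decide

lemma gen_case {d : ℚ_[2]} (hd0 : d ≠ 0) (δ c1 c2 : ℤ)
    (hδ0 : (δ : ℚ_[2]) ≠ 0)
    (hsq : IsSquare (d * (δ : ℚ_[2])))
    (hg1 : isN (δ : ℚ_[2]) (c1 : ℚ_[2]))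
    (hg2 : isN (δ : ℚ_[2]) (c2 : ℚ_[2]))
    (hn1 : ¬IsSquare ((c1 : ℤ) : ℚ_[2])) (hn2 : ¬IsSquare ((c2 : ℤ) : ℚ_[2]))
    (hn12 : ¬IsSquare (((c1 * c2 : ℤ)) : ℚ_[2])) :
    ∃ h1 h2 : ℚ_[2], h1 ≠ 0 ∧ h2 ≠ 0 ∧ isN d h1 ∧ isN d h2 ∧
      ¬IsSquare h1 ∧ ¬IsSquare h2 ∧ ¬IsSquare (h1 * h2) := by
  obtain ⟨e, he⟩ := hsq
  have he0 : e ≠ 0 := by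
    intro h
    rw [h, mul_zero] at he
    exact mul_ne_zero hd0 hδ0 he
  have hde : d = (δ : ℚ_[2]) * (e * (δ : ℚ_[2])⁻¹) ^ 2 := by
    have h2 : (δ : ℚ_[2]) * (e * (δ : ℚ_[2])⁻¹) ^ 2 = (e * e) * ((δ : ℚ_[2])⁻¹) := by
      field_simp
    rw [h2, ← he, mul_assoc, mul_inv_cancel₀ hδ0, mul_one]
  have hiff : ∀ t : ℚ_[2], isN d t ↔ isN (δ : ℚ_[2]) t := by
    intro t
    constructor
    · intro h
      rw [hde] at h
      exact (isN_scale _ (mul_ne_zero he0 (inv_ne_zero hδ0))).mp h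
    · intro h
      rw [hde]
      exact (isN_scale _ (mul_ne_zero he0 (inv_ne_zero hδ0))).mpr h
  have hc10 : (c1 : ℚ_[2]) ≠ 0 := fun h => hn1 (h ▸ ⟨0, by ring⟩)
  have hc20 : (c2 : ℚ_[2]) ≠ 0 := fun h => hn2 (h ▸ ⟨0, by ring⟩)
  refine ⟨(c1 : ℚ_[2]), (c2 : ℚ_[2]), hc10, hc20, (hiff _).mpr hg1, (hiff _).mpr hg2,
    hn1, hn2, ?_⟩
  have hcast : ((c1 * c2 : ℤ) : ℚ_[2]) = (c1 : ℚ_[2]) * (c2 : ℚ_[2]) := by push_cast; ring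
  rwa [hcast] at hn12

set_option maxHeartbeats 1000000 in
lemma key_two {d x y : ℚ_[2]} (hd0 : d ≠ 0) (hd : ¬IsSquare d)
    (hx0 : x ≠ 0) (hy0 : y ≠ 0) (hx : ¬isN d x) (hy : ¬isN d y) : isN d (x * y) := by
  have hzz : ∀ m : ℤ, m ≠ 0 → (m : ℚ_[2]) ≠ 0 := fun m hm => Int.cast_ne_zero.mpr hm
  obtain ⟨h1, h2, h10, h20, hN1, hN2, hns1, hns2, hns12⟩ :
      ∃ h1 h2 : ℚ_[2], h1 ≠ 0 ∧ h2 ≠ 0 ∧ isN d h1 ∧ isN d h2 ∧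
        ¬IsSquare h1 ∧ ¬IsSquare h2 ∧ ¬IsSquare (h1 * h2) := by
    have mkSq : ∀ m : ℤ, (m : ℚ_[2]) ≠ 0 → V2 d + V2 (m : ℚ_[2]) = 0 →
        R8 d * R8 (m : ℚ_[2]) = 1 → IsSquare (d * (m : ℚ_[2])) := by
      intro m hm hv hr
      rw [isSquare_iff_two (mul_ne_zero hd0 hm), V2_mul hd0 hm, R8_mul hd0 hm]
      exact ⟨hv, hr⟩
    have hv2 : V2 d = 0 ∨ V2 d = 1 := (by decide : ∀ a : ZMod 2, a = 0 ∨ a = 1) _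
    have hr8 : R8 d = 1 ∨ R8 d = 3 ∨ R8 d = 5 ∨ R8 d = 7 :=
      (by decide : ∀ a : ZMod (2 ^ 3), IsUnit a → a = 1 ∨ a = 3 ∨ a = 5 ∨ a = 7) _ (R8_unit hd0)
    rcases hv2 with hv | hv <;> rcases hr8 with hr | hr | hr | hr
    · exact absurd ((isSquare_iff_two hd0).mpr ⟨hv, hr⟩) hd
    · refine gen_case hd0 3 (-3) (-2) (hzz 3 (by norm_num)) ?_ ?_ ?_ ?_ ?_ ?_
      · exact mkSq 3 (hzz 3 (by norm_num))
          (by rw [hv, (odd_facts (by decide : Odd (3 : ℤ))).2.1]; decide)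
          (by rw [hr, (odd_facts (by decide : Odd (3 : ℤ))).2.2]; push_cast; decide)
      · exact ⟨0, 1, by push_cast; norm_num⟩
      · exact ⟨1, 1, by push_cast; norm_num⟩
      · exact ns_odd (by decide) (by push_cast; decide)
      · exact ns_even (-1) (by decide) (by norm_num)
      · exact ns_even 3 (by decide) (by norm_num)
    · refine gen_case hd0 5 (-5) (-1) (hzz 5 (by norm_num)) ?_ ?_ ?_ ?_ ?_ ?_
      · exact mkSq 5 (hzz 5 (by norm_num))
          (by rw [hv, (odd_facts (by decide : Odd (5 : ℤ))).2.1]; decide)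
          (by rw [hr, (odd_facts (by decide : Odd (5 : ℤ))).2.2]; push_cast; decide)
      · exact ⟨0, 1, by push_cast; norm_num⟩
      · exact ⟨2, 1, by push_cast; norm_num⟩
      · exact ns_odd (by decide) (by push_cast; decide)
      · exact ns_odd (by decide) (by push_cast; decide)
      · exact ns_odd (by decide) (by push_cast; decide)
    · refine gen_case hd0 7 (-3) (-6) (hzz 7 (by norm_num)) ?_ ?_ ?_ ?_ ?_ ?_
      · exact mkSq 7 (hzz 7 (by norm_num))
          (by rw [hv, (odd_facts (by decide : Odd (7 : ℤ))).2.1]; decide)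
          (by rw [hr, (odd_facts (by decide : Odd (7 : ℤ))).2.2]; push_cast; decide)
      · exact ⟨2, 1, by push_cast; norm_num⟩
      · exact ⟨1, 1, by push_cast; norm_num⟩
      · exact ns_odd (by decide) (by push_cast; decide)
      · exact ns_even (-3) (by decide) (by norm_num)
      · exact ns_even 9 (by decide) (by norm_num)
    · refine gen_case hd0 2 (-1) (-2) (hzz 2 (by norm_num)) ?_ ?_ ?_ ?_ ?_ ?_
      · exact mkSq 2 (hzz 2 (by norm_num))
          (by rw [hv, (even_facts 1 (by decide) (by norm_num)).2.1]; decide)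
          (by rw [hr, (even_facts 1 (by decide) (by norm_num)).2.2]; push_cast; decide)
      · exact ⟨1, 1, by push_cast; norm_num⟩
      · exact ⟨0, 1, by push_cast; norm_num⟩
      · exact ns_odd (by decide) (by push_cast; decide)
      · exact ns_even (-1) (by decide) (by norm_num)
      · exact ns_even 1 (by decide) (by norm_num)
    · refine gen_case hd0 6 (-5) (-6) (hzz 6 (by norm_num)) ?_ ?_ ?_ ?_ ?_ ?_
      · exact mkSq 6 (hzz 6 (by norm_num))
          (by rw [hv, (even_facts 3 (by decide) (by norm_num)).2.1]; decide)
          (by rw [hr, (even_facts 3 (by decide) (by norm_num)).2.2]; push_cast; decide)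
      · exact ⟨1, 1, by push_cast; norm_num⟩
      · exact ⟨0, 1, by push_cast; norm_num⟩
      · exact ns_odd (by decide) (by push_cast; decide)
      · exact ns_even (-3) (by decide) (by norm_num)
      · exact ns_even 15 (by decide) (by norm_num)
    · refine gen_case hd0 10 (-9) (-10) (hzz 10 (by norm_num)) ?_ ?_ ?_ ?_ ?_ ?_
      · exact mkSq 10 (hzz 10 (by norm_num))
          (by rw [hv, (even_facts 5 (by decide) (by norm_num)).2.1]; decide)
          (by rw [hr, (even_facts 5 (by decide) (by norm_num)).2.2]; push_cast; decide)
      · exact ⟨1, 1, by push_cast; norm_num⟩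
      · exact ⟨0, 1, by push_cast; norm_num⟩
      · exact ns_odd (by decide) (by push_cast; decide)
      · exact ns_even (-5) (by decide) (by norm_num)
      · exact ns_even 45 (by decide) (by norm_num)
    · refine gen_case hd0 14 (-13) (-14) (hzz 14 (by norm_num)) ?_ ?_ ?_ ?_ ?_ ?_
      · exact mkSq 14 (hzz 14 (by norm_num))
          (by rw [hv, (even_facts 7 (by decide) (by norm_num)).2.1]; decide)
          (by rw [hr, (even_facts 7 (by decide) (by norm_num)).2.2]; push_cast; decide)
      · exact ⟨1, 1, by push_cast; norm_num⟩
      · exact ⟨0, 1, by push_cast; norm_num⟩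
      · exact ns_odd (by decide) (by push_cast; decide)
      · exact ns_even (-7) (by decide) (by norm_num)
      · exact ns_even 91 (by decide) (by norm_num)
  have hh12 : h1 * h2 ≠ 0 := mul_ne_zero h10 h20
  have hN12 : isN d (h1 * h2) := isN_mul hN1 hN2
  have step : ∀ t : ℚ_[2], t ≠ 0 → ¬isN d t →
      ¬IsSquare t ∧ ¬IsSquare (t * h1) ∧ ¬IsSquare (t * h2) ∧ ¬IsSquare (t * (h1 * h2)) := by
    intro t ht hN
    refine ⟨fun hs => hN (isN_of_isSquare hs), fun hs => ?_, fun hs => ?_, fun hs => ?_⟩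
    · have h3 := isN_of_isSquare (d := d) hs
      rw [mul_comm] at h3
      exact hN (isN_cancel h10 hN1 h3)
    · have h3 := isN_of_isSquare (d := d) hs
      rw [mul_comm] at h3
      exact hN (isN_cancel h20 hN2 h3)
    · have h3 := isN_of_isSquare (d := d) hs
      rw [mul_comm] at h3
      exact hN (isN_cancel hh12 hN12 h3)
  obtain ⟨nx0', nx1', nx2', nx12'⟩ := step x hx0 hx
  obtain ⟨ny0', ny1', ny2', ny12'⟩ := step y hy0 hy
  have hxy0 : x * y ≠ 0 := mul_ne_zero hx0 hy0
  suffices hS : IsSquare (x * y) ∨ IsSquare (x * y * h1) ∨ IsSquare (x * y * h2) ∨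
      IsSquare (x * y * (h1 * h2)) by
    rcases hS with hS | hS | hS | hS
    · exact isN_of_isSquare hS
    · have h3 := isN_of_isSquare (d := d) hS
      rw [mul_comm] at h3
      exact isN_cancel h10 hN1 h3
    · have h3 := isN_of_isSquare (d := d) hS
      rw [mul_comm] at h3
      exact isN_cancel h20 hN2 h3
    · have h3 := isN_of_isSquare (d := d) hS
      rw [mul_comm] at h3
      exact isN_cancel hh12 hN12 h3
  have hunit : ∀ t : ℚ_[2], t ≠ 0 → R8 t * R8 t = 1 := fun t ht =>
    (by decide : ∀ a : ZMod (2 ^ 3), IsUnit a → a * a = 1) _ (R8_unit ht)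
  rw [isSquare_iff_two h10] at hns1
  rw [isSquare_iff_two h20] at hns2
  rw [isSquare_iff_two hh12, V2_mul h10 h20, R8_mul h10 h20] at hns12
  rw [isSquare_iff_two hx0] at nx0'
  rw [isSquare_iff_two (mul_ne_zero hx0 h10), V2_mul hx0 h10, R8_mul hx0 h10] at nx1'
  rw [isSquare_iff_two (mul_ne_zero hx0 h20), V2_mul hx0 h20, R8_mul hx0 h20] at nx2'
  rw [isSquare_iff_two (mul_ne_zero hx0 hh12), V2_mul hx0 hh12, R8_mul hx0 hh12,
    V2_mul h10 h20, R8_mul h10 h20] at nx12'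
  rw [isSquare_iff_two hy0] at ny0'
  rw [isSquare_iff_two (mul_ne_zero hy0 h10), V2_mul hy0 h10, R8_mul hy0 h10] at ny1'
  rw [isSquare_iff_two (mul_ne_zero hy0 h20), V2_mul hy0 h20, R8_mul hy0 h20] at ny2'
  rw [isSquare_iff_two (mul_ne_zero hy0 hh12), V2_mul hy0 hh12, R8_mul hy0 hh12,
    V2_mul h10 h20, R8_mul h10 h20] at ny12'
  rw [isSquare_iff_two hxy0, isSquare_iff_two (mul_ne_zero hxy0 h10),
    isSquare_iff_two (mul_ne_zero hxy0 h20), isSquare_iff_two (mul_ne_zero hxy0 hh12),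
    V2_mul hxy0 h10, R8_mul hxy0 h10, V2_mul hxy0 h20, R8_mul hxy0 h20,
    V2_mul hxy0 hh12, R8_mul hxy0 hh12, V2_mul h10 h20, R8_mul h10 h20,
    V2_mul hx0 hy0, R8_mul hx0 hy0]
  exact klein8 (V2 x) (V2 y) (V2 h1) (V2 h2) (R8 x) (R8 y) (R8 h1) (R8 h2)
    (hunit x hx0) (hunit y hy0) (hunit h1 h10) (hunit h2 h20)
    hns1 hns2 hns12 nx0' nx1' nx2' nx12' ny0' ny1' ny2' ny12'

/-- The key local fact: the product of two non-norms is a norm. -/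
lemma key {d x y : ℚ_[p]} (hd0 : d ≠ 0) (hd : ¬IsSquare d) (hx0 : x ≠ 0) (hy0 : y ≠ 0)
    (hx : ¬isN d x) (hy : ¬isN d y) : isN d (x * y) := by
  rcases eq_or_ne p 2 with rfl | hp2
  · exact key_two hd0 hd hx0 hy0 hx hy
  · exact key_odd hp2 hd0 hd hx0 hy0 hx hy

lemma hs_mul (d : ℚ_[p]) {x y : ℚ_[p]} (hx0 : x ≠ 0) (hy0 : y ≠ 0) :
    hilbertSym p d (x * y) = hilbertSym p d x * hilbertSym p d y := by
  by_cases hd : IsSquare d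
  · rw [hs_one_of_isSquare _ hd, hs_one_of_isSquare _ hd, hs_one_of_isSquare _ hd]; ring
  have hd0 : d ≠ 0 := by rintro rfl; exact hd ⟨0, by ring⟩
  by_cases hx : isN d x <;> by_cases hy : isN d y
  · rw [(hs_eq_one_iff hd).mpr (isN_mul hx hy), (hs_eq_one_iff hd).mpr hx,
      (hs_eq_one_iff hd).mpr hy]; ring
  · rw [(hs_eq_one_iff hd).mpr hx, (hs_neg_one_iff hd).mpr hy, (hs_neg_one_iff hd).mpr]
    · ring
    · intro hxy; exact hy (isN_cancel hx0 hx hxy)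
  · rw [(hs_neg_one_iff hd).mpr hx, (hs_eq_one_iff hd).mpr hy, (hs_neg_one_iff hd).mpr]
    · ring
    · intro hxy; rw [mul_comm] at hxy; exact hx (isN_cancel hy0 hy hxy)
  · rw [(hs_neg_one_iff hd).mpr hx, (hs_neg_one_iff hd).mpr hy,
      (hs_eq_one_iff hd).mpr (key hd0 hd hx0 hy0 hx hy)]; ring

lemma hs_vals (d b : ℚ_[p]) : hilbertSym p d b = 1 ∨ hilbertSym p d b = -1 := by
  rw [hilbertSym]; split_ifs <;> simp

end HilbAux

/-- For `a, c, u ∈ ℚ_p^×` with `a + u·a⁻¹·c ≠ 0`: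
`(−a·c, a + u·a⁻¹·c)·(u·a⁻¹, a²·u⁻¹ + c) = (−u·c, a)·(u·a⁻¹, −1)`. -/
theorem hilbertSym_sign_identity (p : ℕ) [Fact p.Prime] (a c u : ℚ_[p])
    (ha : a ≠ 0) (hc : c ≠ 0) (hu : u ≠ 0) (h : a + u * a⁻¹ * c ≠ 0) :
    hilbertSym p (-(a * c)) (a + u * a⁻¹ * c) * hilbertSym p (u * a⁻¹) (a ^ 2 * u⁻¹ + c) =
      hilbertSym p (-(u * c)) a * hilbertSym p (u * a⁻¹) (-1) := by
  open HilbAux in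
  set s : ℚ_[p] := u * a⁻¹ with hs
  set b : ℚ_[p] := a + u * a⁻¹ * c with hb
  have hs0 : s ≠ 0 := mul_ne_zero hu (inv_ne_zero ha)
  have hkey1 : a ^ 2 * u⁻¹ + c = s⁻¹ * b := by
    rw [hb, hs]; field_simp
  -- ε(s, s⁻¹·b) = ε(s,-1) * ε(s,b)
  have e1 : hilbertSym p s (s⁻¹ * b) = hilbertSym p s (-1) * hilbertSym p s b := by
    have h1 : s⁻¹ = (-1) * (-s⁻¹) := by ring
    have h2 : hilbertSym p s (-s⁻¹) = 1 := by
      apply hs_one_of_isN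
      have : (-s : ℚ_[p]) * (s⁻¹ ^ 2) = -s⁻¹ := by field_simp
      rw [← this]
      exact isN_mul (isN_neg_d s) (isN_sq _)
    rw [hs_mul s (inv_ne_zero hs0) h, h1,
      hs_mul s (by norm_num) (by simpa using hs0), h2, mul_one]
  -- ε(-ac, b) * ε(s, b) = ε(-uc, b)
  have e2 : hilbertSym p (-(a * c)) b * hilbertSym p s b = hilbertSym p (-(u * c)) b := by
    rw [hs_symm (-(a*c)) b, hs_symm s b, ← hs_mul b (by simpa using mul_ne_zero ha hc) hs0,
      hs_symm b]
    congr 1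
    rw [hs]; field_simp
  -- ε(-uc, b) = ε(-uc, a)
  have e3 : hilbertSym p (-(u * c)) b = hilbertSym p (-(u * c)) a := by
    have hab : isN (-(u * c)) (a * b) := by
      refine ⟨a, 1, ?_⟩
      rw [hb]; field_simp; ring
    have := hs_one_of_isN hab
    rw [hs_mul (-(u*c)) ha h] at this
    rcases hs_vals (-(u*c)) a with h1 | h1 <;> rcases hs_vals (-(u*c)) b with h2 | h2 <;>
      rw [h1, h2] at this ⊢ <;> omega
  calc hilbertSym p (-(a * c)) b * hilbertSym p s (a ^ 2 * u⁻¹ + c)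
      = hilbertSym p (-(a * c)) b * (hilbertSym p s (-1) * hilbertSym p s b) := by
        rw [hkey1, e1]
    _ = (hilbertSym p (-(a * c)) b * hilbertSym p s b) * hilbertSym p s (-1) := by ring
    _ = hilbertSym p (-(u * c)) a * hilbertSym p s (-1) := by rw [e2, e3]
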